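/- Let $R$ be a local Artin ring and suppose given $R$-modules $F, G, H$ with $G, H$ free and finitely generated, maps $\psi: F \to G$, $\eta: G \to H$ with $\varphi = \eta \circ \psi$, such that $\ker\eta$ and $\operatorname{coker}\eta$ are free and $\operatorname{im}\psi \cap \ker\eta = 0$. Then $\operatorname{coker}\varphi$ is free if and only if $\operatorname{coker}\psi$ is free. -/

import Mathlib

open IsLocalRing

/-- A nontrivial Artinian local ring has a nonzero socle element. -/
lemma artinian_local_socle (R : Type*) [CommRing R] [IsLocalRing R] [IsArtinianRing R] :
    ∃ s : R, s ≠ 0 ∧ ∀ a ∈ maximalIdeal R, s * a = 0 := by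
  classical
  have hnil : IsNilpotent (maximalIdeal R) := by
    have h := IsArtinianRing.isNilpotent_jacobson_bot (R := R)
    rwa [IsLocalRing.jacobson_eq_maximalIdeal ⊥ bot_ne_top] at h
  obtain ⟨n, hn⟩ := hnil
  have hP : ∃ k, (maximalIdeal R) ^ k = 0 := ⟨n, hn⟩
  have hk0 : (maximalIdeal R) ^ (Nat.find hP) = 0 := Nat.find_spec hP
  have hkne : Nat.find hP ≠ 0 := by
    intro h
    rw [h, pow_zero, Ideal.one_eq_top] at hk0
    have h1 : (1 : R) ∈ (⊤ : Ideal R) := trivial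
    rw [hk0] at h1
    simp at h1
  obtain ⟨j, hj⟩ := Nat.exists_eq_succ_of_ne_zero hkne
  have hjlt : j < Nat.find hP := by omega
  have hjne : (maximalIdeal R) ^ j ≠ 0 := Nat.find_min hP hjlt
  obtain ⟨s, hs, hs0⟩ := Submodule.exists_mem_ne_zero_of_ne_bot (by simpa using hjne)
  refine ⟨s, hs0, fun a ha => ?_⟩
  have hmem : s * a ∈ (maximalIdeal R) ^ (j + 1) := by
    rw [pow_succ]; exact Ideal.mul_mem_mul hs ha
  have hfind : Nat.find hP = j + 1 := by omega
  rw [hfind] at hk0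
  rw [hk0] at hmem
  simpa using hmem

lemma socle_smul_eq_zero {R N : Type*} [CommRing R] [AddCommGroup N] [Module R N]
    {I : Ideal R} {s : R} (hs : ∀ a ∈ I, s * a = 0)
    {x : N} (hx : x ∈ I • (⊤ : Submodule R N)) : s • x = 0 := by
  refine Submodule.smul_induction_on hx (fun r hr y _ => ?_) (fun y z hy hz => ?_)
  · rw [smul_smul, hs r hr, zero_smul]
  · rw [smul_add, hy, hz, add_zero]

lemma exists_coord {R N : Type*} [CommRing R] [IsLocalRing R] [AddCommGroup N] [Module R N]
    [Module.Free R N] {x : N}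
    (hx : x ∉ (maximalIdeal R) • (⊤ : Submodule R N)) :
    ∃ f : N →ₗ[R] R, f x = 1 := by
  classical
  set b := Module.Free.chooseBasis R N with hb
  have hex : ∃ j, b.repr x j ∉ maximalIdeal R := by
    by_contra h
    push_neg at h
    apply hx
    rw [← b.linearCombination_repr x, Finsupp.linearCombination_apply]
    refine Submodule.sum_mem _ fun j hj => ?_
    exact Submodule.smul_mem_smul (h j) Submodule.mem_top
  obtain ⟨j, hj⟩ := hex
  have hu : IsUnit (b.repr x j) := IsLocalRing.notMem_maximalIdeal.mp hj
  refine ⟨((hu.unit⁻¹ : Rˣ) : R) • b.coord j, ?_⟩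
  simp only [LinearMap.smul_apply, Module.Basis.coord_apply, smul_eq_mul]
  exact hu.val_inv_mul

lemma free_of_proj {R M : Type*} [CommRing R] [IsLocalRing R] [AddCommGroup M] [Module R M]
    [Module.Finite R M] [Module.Projective R M] : Module.Free R M := by
  haveI := Module.finitePresentation_of_projective R M
  exact Module.free_of_flat_of_isLocalRing

lemma split_ker {R A B : Type*} [CommRing R] [AddCommGroup A] [Module R A]
    [AddCommGroup B] [Module R B] [Module.Projective R B]
    (f : A →ₗ[R] B) (hf : Function.Surjective f) :
    ∃ e : A ≃ₗ[R] LinearMap.ker f × B, ∀ z : LinearMap.ker f, e ↑z = (z, 0) := by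
  obtain ⟨s, hs⟩ := Module.projective_lifting_property f LinearMap.id hf
  have hsp : ∀ b, f (s b) = b := fun b => by
    simpa using LinearMap.congr_fun hs b
  let g : A →ₗ[R] A := LinearMap.id - s ∘ₗ f
  have hmem : ∀ a, g a ∈ LinearMap.ker f := fun a => by
    simp [g, LinearMap.mem_ker, map_sub, hsp]
  let u : A →ₗ[R] LinearMap.ker f × B :=
    LinearMap.prod (LinearMap.codRestrict (LinearMap.ker f) g hmem) f
  let v : (LinearMap.ker f × B) →ₗ[R] A :=
    (LinearMap.ker f).subtype ∘ₗ LinearMap.fst R _ _ + s ∘ₗ LinearMap.snd R _ _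
  have h1 : v.comp u = LinearMap.id := by
    apply LinearMap.ext; intro a
    simp [u, v, g, sub_add_cancel]
  have h2 : u.comp v = LinearMap.id := by
    apply LinearMap.ext; rintro ⟨z, c⟩
    have hz : f (z : A) = 0 := z.2
    apply Prod.ext
    · apply Subtype.ext
      simp [u, v, g, hsp, hz]
    · simp [u, v, g, hsp, hz]
  refine ⟨LinearEquiv.ofLinear u v h2 h1, fun z => ?_⟩
  have hz : f (z : A) = 0 := z.2
  show u ↑z = (z, 0)
  apply Prod.ext
  · apply Subtype.ext
    simp [u, g, hz]
  · simp [u, g, hz]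

open IsLocalRing

lemma free_quot_of_free_submodule (R : Type*) [CommRing R] [IsLocalRing R] [IsArtinianRing R] :
    ∀ (n : ℕ) {N : Type*} [AddCommGroup N] [Module R N] [Module.Finite R N] [Module.Free R N]
      (p : Submodule R N) [Module.Finite R p] [Module.Free R p],
      Module.finrank R p = n → Module.Free R (N ⧸ p) := by
  intro n
  induction n using Nat.strong_induction_on with
  | _ n IH =>
    intro N _ _ _ _ p _ _ hrk
    rcases Nat.eq_zero_or_pos n with hn0 | hnpos
    · -- p = ⊥
      subst hn0
      set b := Module.Free.chooseBasis R p with hbdef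
      have hcard : Fintype.card (Module.Free.ChooseBasisIndex R p) = 0 := by
        rw [← Module.finrank_eq_card_chooseBasisIndex]; exact hrk
      haveI : IsEmpty (Module.Free.ChooseBasisIndex R p) := Fintype.card_eq_zero_iff.mp hcard
      haveI : Subsingleton p := b.repr.toEquiv.subsingleton
      have hbot : p = ⊥ := by
        rw [Submodule.eq_bot_iff]
        intro x hx
        have : (⟨x, hx⟩ : p) = 0 := Subsingleton.elim _ _
        simpa using congrArg (Subtype.val) this
      exact Module.Free.of_equiv (p.quotEquivOfEqBot hbot).symm
    · -- pick a basis vector of p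
      set b := Module.Free.chooseBasis R p with hbdef
      have hcard : Fintype.card (Module.Free.ChooseBasisIndex R p) = n := by
        rw [← Module.finrank_eq_card_chooseBasisIndex]; exact hrk
      haveI : Nonempty (Module.Free.ChooseBasisIndex R p) := by
        apply Fintype.card_pos_iff.mp; omega
      obtain ⟨i₀⟩ := ‹Nonempty (Module.Free.ChooseBasisIndex R p)›
      set x₀ : N := (b i₀ : N) with hx₀def
      have hx₀p : x₀ ∈ p := (b i₀).2
      obtain ⟨s, hs0, hsm⟩ := artinian_local_socle R
      have hxm : x₀ ∉ (maximalIdeal R) • (⊤ : Submodule R N) := by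
        intro hmem
        have hsx : s • x₀ = 0 := socle_smul_eq_zero hsm hmem
        have hsb : s • b i₀ = 0 := by
          apply Subtype.ext
          simpa using hsx
        have := congrArg b.repr hsb
        rw [map_smul, map_zero, Module.Basis.repr_self] at this
        have := DFunLike.congr_fun this i₀
        simp at this
        exact hs0 this
      obtain ⟨f, hf⟩ := exists_coord hxm
      -- the projection onto ker f
      set π : N →ₗ[R] N := LinearMap.id - f.smulRight x₀ with hπdef
      have hπ : ∀ y, π y = y - f y • x₀ := fun y => rfl
      have hπker : ∀ y, f (π y) = 0 := fun y => by
        simp [hπ, hf, map_sub, mul_comm]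
      set r : N →ₗ[R] LinearMap.ker f := LinearMap.codRestrict (LinearMap.ker f) π hπker
        with hrdef
      have hrval : ∀ y, ((r y : N)) = y - f y • x₀ := fun y => rfl
      have hrz : ∀ z : LinearMap.ker f, r ↑z = z := fun z => by
        apply Subtype.ext
        have hz : f (z : N) = 0 := z.2
        rw [hrval, hz, zero_smul, sub_zero]
      haveI : Module.Finite R (LinearMap.ker f) :=
        Module.Finite.of_surjective r (fun z => ⟨↑z, hrz z⟩)
      haveI : Module.Projective R (LinearMap.ker f) :=
        Module.Projective.of_split (LinearMap.ker f).subtype r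
          (by apply LinearMap.ext; intro z; exact hrz z)
      haveI : Module.Free R (LinearMap.ker f) := free_of_proj
      -- the smaller submodule
      set p'' : Submodule R (LinearMap.ker f) := p.comap (LinearMap.ker f).subtype with hp''def
      set i' : p'' →ₗ[R] p :=
        LinearMap.codRestrict p ((LinearMap.ker f).subtype ∘ₗ p''.subtype) (fun z => z.2)
        with hi'def
      have hπp : ∀ y : p, π ↑y ∈ p := fun y => by
        rw [hπ]
        exact sub_mem y.2 (Submodule.smul_mem p _ hx₀p)
      set r' : p →ₗ[R] p'' := LinearMap.codRestrict p'' (r ∘ₗ p.subtype) (fun y => hπp y)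
        with hr'def
      have hr'i' : ∀ z : p'', r' (i' z) = z := by
        intro z
        apply Subtype.ext
        apply Subtype.ext
        have hz : f ((z : LinearMap.ker f) : N) = 0 := (z : LinearMap.ker f).2
        show ((r ((i' z : p) : N) : N)) = ((z : LinearMap.ker f) : N)
        rw [hrval]
        have : ((i' z : p) : N) = ((z : LinearMap.ker f) : N) := rfl
        rw [this, hz, zero_smul, sub_zero]
      haveI : Module.Finite R p'' :=
        Module.Finite.of_surjective r' (fun z => ⟨i' z, hr'i' z⟩)
      haveI : Module.Projective R p :=
        Module.Projective.of_free
      haveI : Module.Projective R p'' :=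
        Module.Projective.of_split i' r' (by apply LinearMap.ext; intro z; exact hr'i' z)
      haveI : Module.Free R p'' := free_of_proj
      -- p ≃ R × p''
      set xp : p := ⟨x₀, hx₀p⟩ with hxpdef
      set u : p →ₗ[R] R × p'' := LinearMap.prod (f ∘ₗ p.subtype) r' with hudef
      set v : (R × p'') →ₗ[R] p :=
        (LinearMap.toSpanSingleton R p xp) ∘ₗ LinearMap.fst R R p''
          + i' ∘ₗ LinearMap.snd R R p'' with hvdef
      have hvu : v.comp u = LinearMap.id := by
        apply LinearMap.ext; intro y
        apply Subtype.ext
        show (f ↑y • xp + i' (r' y) : p).1 = (y : N)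
        have h1 : ((i' (r' y) : p) : N) = π ↑y := rfl
        calc (f ↑y • xp + i' (r' y) : p).1
            = f ↑y • x₀ + π ↑y := by
              rw [Submodule.coe_add, Submodule.coe_smul, h1]
          _ = (y : N) := by rw [hπ]; abel
      have huv : u.comp v = LinearMap.id := by
        apply LinearMap.ext; rintro ⟨a, z⟩
        have hz : f ((z : LinearMap.ker f) : N) = 0 := (z : LinearMap.ker f).2
        have hval : ((v (a, z) : p) : N) = a • x₀ + ((z : LinearMap.ker f) : N) := rfl
        apply Prod.ext
        · show f ((v (a, z) : p) : N) = a
          rw [hval, map_add, map_smul, hf, hz, smul_eq_mul, mul_one, add_zero]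
        · show r' (v (a, z)) = z
          apply Subtype.ext
          apply Subtype.ext
          show ((r ((v (a, z) : p) : N) : N)) = ((z : LinearMap.ker f) : N)
          rw [hrval, hval, map_add, map_smul, hf, hz, smul_eq_mul, mul_one, add_zero]
          abel
      have e : p ≃ₗ[R] R × p'' := LinearEquiv.ofLinear u v huv hvu
      have hrk'' : Module.finrank R p'' = n - 1 := by
        have h1 : Module.finrank R p = Module.finrank R (R × p'') := e.finrank_eq
        rw [Module.finrank_prod, Module.finrank_self] at h1
        omega
      have hfree'' : Module.Free R ((LinearMap.ker f) ⧸ p'') :=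
        IH (n - 1) (by omega) p'' hrk''
      -- transfer along (ker f) ⧸ p'' ≃ N ⧸ p
      set h : LinearMap.ker f →ₗ[R] (N ⧸ p) := p.mkQ ∘ₗ (LinearMap.ker f).subtype with hhdef
      have hsurj : Function.Surjective h := by
        intro q
        obtain ⟨y, rfl⟩ := p.mkQ_surjective q
        refine ⟨r y, ?_⟩
        show p.mkQ ((r y : N)) = p.mkQ y
        rw [hrval, Submodule.mkQ_apply, Submodule.mkQ_apply, Submodule.Quotient.eq]
        have harr : y - f y • x₀ - y = -(f y • x₀) := by abel
        rw [harr]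
        exact Submodule.neg_mem p (Submodule.smul_mem p _ hx₀p)
      have hkerh : LinearMap.ker h = p'' := by
        rw [hhdef, LinearMap.ker_comp, Submodule.ker_mkQ]
      haveI := hfree''
      exact Module.Free.of_equiv
        ((Submodule.quotEquivOfEq p'' (LinearMap.ker h) hkerh.symm).trans
          (h.quotKerEquivOfSurjective hsurj))

lemma ker_finite_of_split {R A B : Type*} [CommRing R] [AddCommGroup A] [Module R A]
    [AddCommGroup B] [Module R B] [Module.Projective R B] [Module.Finite R A]
    (f : A →ₗ[R] B) (hf : Function.Surjective f) : Module.Finite R (LinearMap.ker f) := by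
  obtain ⟨e, he⟩ := split_ker f hf
  refine Module.Finite.of_surjective (LinearMap.fst R _ _ ∘ₗ e.toLinearMap) (fun z => ⟨↑z, ?_⟩)
  simp [he]

lemma ker_projective_of_split {R A B : Type*} [CommRing R] [AddCommGroup A] [Module R A]
    [AddCommGroup B] [Module R B] [Module.Projective R B] [Module.Projective R A]
    (f : A →ₗ[R] B) (hf : Function.Surjective f) : Module.Projective R (LinearMap.ker f) := by
  obtain ⟨e, he⟩ := split_ker f hf
  refine Module.Projective.of_split (LinearMap.ker f).subtype
    (LinearMap.fst R _ _ ∘ₗ e.toLinearMap) ?_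
  apply LinearMap.ext; intro z
  simp [he]

/-- **Lemma.** Let `R` be a local Artin ring, `ψ : F → G`, `η : G → H` with `G, H`
finitely generated free, `φ = η ∘ ψ`, such that `ker η` and `coker η` are free
(i.e. `η` has constant rank) and `im ψ ∩ ker η = 0`. Then `coker φ` is free if and
only if `coker ψ` is free. -/
theorem coker_comp_free_iff
    (R : Type*) [CommRing R] [IsLocalRing R] [IsArtinianRing R]
    (F G H : Type*) [AddCommGroup F] [Module R F]
    [AddCommGroup G] [Module R G] [Module.Finite R G] [Module.Free R G]
    [AddCommGroup H] [Module R H] [Module.Finite R H] [Module.Free R H]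
    (ψ : F →ₗ[R] G) (η : G →ₗ[R] H)
    (hker : Module.Free R (LinearMap.ker η))
    (hcoker : Module.Free R (H ⧸ LinearMap.range η))
    (hint : LinearMap.range ψ ⊓ LinearMap.ker η = ⊥) :
    Module.Free R (H ⧸ LinearMap.range (η ∘ₗ ψ)) ↔
      Module.Free R (G ⧸ LinearMap.range ψ) := by
  classical
  haveI := hker
  haveI := hcoker
  -- basic finiteness of the quotients
  haveI : Module.Finite R (H ⧸ LinearMap.range η) :=
    Module.Finite.of_surjective _ (Submodule.mkQ_surjective (LinearMap.range η))
  haveI : Module.Finite R (H ⧸ LinearMap.range (η ∘ₗ ψ)) :=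
    Module.Finite.of_surjective _ (Submodule.mkQ_surjective (LinearMap.range (η ∘ₗ ψ)))
  haveI : Module.Finite R (G ⧸ LinearMap.range ψ) :=
    Module.Finite.of_surjective _ (Submodule.mkQ_surjective (LinearMap.range ψ))
  -- `range η` is finite and free
  haveI : Module.Finite R (LinearMap.ker (LinearMap.range η).mkQ) :=
    ker_finite_of_split _ (Submodule.mkQ_surjective _)
  haveI : Module.Projective R (LinearMap.ker (LinearMap.range η).mkQ) :=
    ker_projective_of_split _ (Submodule.mkQ_surjective _)
  haveI : Module.Free R (LinearMap.ker (LinearMap.range η).mkQ) := free_of_proj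
  have eRange : (LinearMap.ker (LinearMap.range η).mkQ) ≃ₗ[R] LinearMap.range η :=
    LinearEquiv.ofEq _ _ (Submodule.ker_mkQ _)
  haveI : Module.Finite R (LinearMap.range η) := Module.Finite.equiv eRange
  haveI : Module.Free R (LinearMap.range η) := Module.Free.of_equiv eRange
  -- `G ⧸ ker η` is free, hence `ker η` is finite
  haveI : Module.Free R (G ⧸ LinearMap.ker η) :=
    Module.Free.of_equiv η.quotKerEquivRange.symm
  haveI : Module.Finite R (LinearMap.ker (LinearMap.ker η).mkQ) :=
    ker_finite_of_split _ (Submodule.mkQ_surjective _)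
  have eKer : (LinearMap.ker (LinearMap.ker η).mkQ) ≃ₗ[R] LinearMap.ker η :=
    LinearEquiv.ofEq _ _ (Submodule.ker_mkQ _)
  haveI : Module.Finite R (LinearMap.ker η) := Module.Finite.equiv eKer
  -- the map `q : coker φ → coker η`
  have hle : LinearMap.range (η ∘ₗ ψ) ≤ (LinearMap.range η).comap LinearMap.id := by
    rw [Submodule.comap_id]; exact LinearMap.range_comp_le_range ψ η
  set q : (H ⧸ LinearMap.range (η ∘ₗ ψ)) →ₗ[R] (H ⧸ LinearMap.range η) :=
    Submodule.mapQ _ _ LinearMap.id hle with hqdef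
  have hq_mk : ∀ x : H, q (Submodule.Quotient.mk x) = Submodule.Quotient.mk x := fun x => by
    simp [hqdef, Submodule.mapQ_apply]
  have hq_surj : Function.Surjective q := by
    intro z
    obtain ⟨x, rfl⟩ := Submodule.mkQ_surjective _ z
    exact ⟨Submodule.Quotient.mk x, hq_mk x⟩
  -- `u : G → coker φ` with range `ker q` and kernel `range ψ ⊔ ker η`
  set u : G →ₗ[R] (H ⧸ LinearMap.range (η ∘ₗ ψ)) :=
    (LinearMap.range (η ∘ₗ ψ)).mkQ ∘ₗ η with hudef
  have hrange_u : LinearMap.range u = LinearMap.ker q := by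
    ext z
    constructor
    · rintro ⟨g, rfl⟩
      show q (u g) = 0
      have : u g = Submodule.Quotient.mk (η g) := rfl
      rw [this, hq_mk, Submodule.Quotient.mk_eq_zero]
      exact ⟨g, rfl⟩
    · intro hz
      obtain ⟨x, rfl⟩ := Submodule.mkQ_surjective _ z
      have hx : (Submodule.Quotient.mk x : H ⧸ LinearMap.range η) = 0 := by
        have := LinearMap.mem_ker.mp hz
        rwa [Submodule.mkQ_apply, hq_mk] at this
      rw [Submodule.Quotient.mk_eq_zero] at hx
      obtain ⟨g, rfl⟩ := hx
      exact ⟨g, rfl⟩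
  have hker_u : LinearMap.ker u = LinearMap.range ψ ⊔ LinearMap.ker η := by
    ext g
    simp only [LinearMap.mem_ker, hudef, LinearMap.comp_apply, Submodule.mkQ_apply,
      Submodule.Quotient.mk_eq_zero]
    constructor
    · rintro ⟨x, hx⟩
      have h1 : g - ψ x ∈ LinearMap.ker η := by
        rw [LinearMap.mem_ker, map_sub]
        rw [LinearMap.comp_apply] at hx
        rw [hx]
        abel
      have h2 : g = ψ x + (g - ψ x) := by abel
      rw [h2]
      exact Submodule.add_mem_sup ⟨x, rfl⟩ h1
    · intro hg
      rw [Submodule.mem_sup] at hg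
      obtain ⟨y, hy, z, hz, rfl⟩ := hg
      obtain ⟨x, rfl⟩ := hy
      refine ⟨x, ?_⟩
      rw [LinearMap.comp_apply, map_add, LinearMap.mem_ker.mp hz, add_zero]
  have iso2 : (G ⧸ (LinearMap.range ψ ⊔ LinearMap.ker η)) ≃ₗ[R] LinearMap.ker q :=
    ((Submodule.quotEquivOfEq _ _ hker_u.symm).trans u.quotKerEquivRange).trans
      (LinearEquiv.ofEq _ _ hrange_u)
  -- the submodule `S = image of ker η in coker ψ`
  set S : Submodule R (G ⧸ LinearMap.range ψ) :=
    (LinearMap.ker η).map (LinearMap.range ψ).mkQ with hSdef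
  set t : (LinearMap.ker η) →ₗ[R] (G ⧸ LinearMap.range ψ) :=
    (LinearMap.range ψ).mkQ ∘ₗ (LinearMap.ker η).subtype with htdef
  have ht_inj : Function.Injective t := by
    apply LinearMap.ker_eq_bot.mp
    rw [Submodule.eq_bot_iff]
    intro z hz
    have hz' : ((z : G) : G) ∈ LinearMap.range ψ := by
      have := LinearMap.mem_ker.mp hz
      rw [htdef, LinearMap.comp_apply, Submodule.mkQ_apply,
        Submodule.Quotient.mk_eq_zero] at this
      exact this
    have hmem : (z : G) ∈ LinearMap.range ψ ⊓ LinearMap.ker η := ⟨hz', z.2⟩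
    rw [hint] at hmem
    exact Subtype.ext hmem
  have hrange_t : LinearMap.range t = S := by
    rw [htdef, LinearMap.range_comp, Submodule.range_subtype, hSdef]
  have iso4 : (LinearMap.ker η) ≃ₗ[R] S :=
    (LinearEquiv.ofInjective t ht_inj).trans (LinearEquiv.ofEq _ _ hrange_t)
  -- `coker ψ ⧸ S ≃ G ⧸ (range ψ ⊔ ker η)`
  set w : G →ₗ[R] ((G ⧸ LinearMap.range ψ) ⧸ S) :=
    S.mkQ ∘ₗ (LinearMap.range ψ).mkQ with hwdef
  have hw_surj : Function.Surjective w :=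
    (Submodule.mkQ_surjective S).comp (Submodule.mkQ_surjective _)
  have hker_w : LinearMap.ker w = LinearMap.range ψ ⊔ LinearMap.ker η := by
    rw [hwdef, LinearMap.ker_comp, Submodule.ker_mkQ, hSdef, Submodule.comap_map_mkQ]
  have iso3 : (G ⧸ (LinearMap.range ψ ⊔ LinearMap.ker η)) ≃ₗ[R]
      ((G ⧸ LinearMap.range ψ) ⧸ S) :=
    (Submodule.quotEquivOfEq _ _ hker_w.symm).trans (w.quotKerEquivOfSurjective hw_surj)
  -- split `q`
  obtain ⟨eq', heq'⟩ := split_ker q hq_surj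
  constructor
  · intro hA
    haveI := hA
    haveI : Module.Projective R (LinearMap.ker q) := ker_projective_of_split q hq_surj
    haveI : Module.Finite R (LinearMap.ker q) := ker_finite_of_split q hq_surj
    haveI : Module.Free R (LinearMap.ker q) := free_of_proj
    haveI : Module.Free R (G ⧸ (LinearMap.range ψ ⊔ LinearMap.ker η)) :=
      Module.Free.of_equiv iso2.symm
    haveI : Module.Free R ((G ⧸ LinearMap.range ψ) ⧸ S) := Module.Free.of_equiv iso3
    obtain ⟨eS, heS⟩ := split_ker S.mkQ (Submodule.mkQ_surjective S)
    haveI : Module.Free R S := Module.Free.of_equiv iso4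
    haveI : Module.Free R (LinearMap.ker S.mkQ) :=
      Module.Free.of_equiv (LinearEquiv.ofEq _ _ (Submodule.ker_mkQ S)).symm
    exact Module.Free.of_equiv eS.symm
  · intro hB
    haveI := hB
    haveI : Module.Free R S := Module.Free.of_equiv iso4
    haveI : Module.Finite R S := Module.Finite.equiv iso4
    haveI : Module.Free R ((G ⧸ LinearMap.range ψ) ⧸ S) :=
      free_quot_of_free_submodule R (Module.finrank R S) S rfl
    haveI : Module.Free R (G ⧸ (LinearMap.range ψ ⊔ LinearMap.ker η)) :=
      Module.Free.of_equiv iso3.symm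
    haveI : Module.Free R (LinearMap.ker q) := Module.Free.of_equiv iso2
    exact Module.Free.of_equiv eq'.symm
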